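/- There exists no finite simple graph on a nonempty vertex set that is 5-regular and in which the subgraph induced by the open neighbourhood of every vertex has exactly 8 edges; that is, no (5,8)-constant graph exists. -/

import Mathlib

/-- The number of edges of the subgraph of `G` induced by the open
neighbourhood of the vertex `v` (the quantity `e(v)`). -/
noncomputable def nbhdEdgeCount {V : Type*} (G : SimpleGraph V) (v : V) : ℕ :=
  Nat.card (SimpleGraph.induce (G.neighborSet v) G).edgeSet

section
variable {V : Type} [Fintype V] [DecidableEq V] {G : SimpleGraph V} [DecidableRel G.Adj]

lemma sum_lambda (v : V) (h8 : nbhdEdgeCount G v = 8) :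
    ∑ u ∈ G.neighborFinset v, (G.neighborFinset u ∩ G.neighborFinset v).card = 16 := by
  classical
  set H := SimpleGraph.induce (G.neighborSet v) G with hH
  have hdeg : ∀ x : G.neighborSet v, H.degree x
      = (G.neighborFinset ↑x ∩ G.neighborFinset v).card := by
    intro x
    unfold SimpleGraph.degree
    refine Finset.card_bij (fun y _ => (y : V)) ?_ ?_ ?_
    · intro y hy
      simp only [SimpleGraph.mem_neighborFinset] at hy ⊢
      simp only [Finset.mem_inter, SimpleGraph.mem_neighborFinset]
      exact ⟨hy, y.2⟩
    · intro a ha b hb hab; exact Subtype.ext hab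
    · intro z hz
      simp only [Finset.mem_inter, SimpleGraph.mem_neighborFinset] at hz
      exact ⟨⟨z, hz.2⟩, by rw [SimpleGraph.mem_neighborFinset]; exact hz.1, rfl⟩
  have hcard : Nat.card H.edgeSet = H.edgeFinset.card := by
    rw [Nat.card_eq_fintype_card, SimpleGraph.edgeFinset_card]
  have hs : ∑ x : G.neighborSet v, H.degree x = 2 * H.edgeFinset.card :=
    SimpleGraph.sum_degrees_eq_twice_card_edges H
  have h8' : H.edgeFinset.card = 8 := by
    rw [← hcard]; exact h8
  rw [h8'] at hs
  calc ∑ u ∈ G.neighborFinset v, (G.neighborFinset u ∩ G.neighborFinset v).card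
      = ∑ x : G.neighborSet v, (G.neighborFinset ↑x ∩ G.neighborFinset v).card := by
        rw [Finset.sum_set_coe (f := fun u => (G.neighborFinset u ∩ G.neighborFinset v).card)]
        rfl
    _ = ∑ x : G.neighborSet v, H.degree x := by simp [hdeg]
    _ = 16 := hs

end

section
variable {V : Type} [Fintype V] [DecidableEq V] (G : SimpleGraph V) [DecidableRel G.Adj]

/-- closed neighbourhood as a finset -/
def clF (u : V) : Finset V := insert u (G.neighborFinset u)

variable {G}

lemma mem_clF {u x : V} : x ∈ clF G u ↔ x = u ∨ G.Adj u x := by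
  simp [clF]

lemma tw_adj {u v : V} (h : clF G u = clF G v) (hne : u ≠ v) : G.Adj u v := by
  have : u ∈ clF G v := h ▸ (mem_clF.2 (Or.inl rfl))
  rcases mem_clF.1 this with h' | h'
  · exact absurd h' hne
  · exact h'.symm

lemma tw_adj_iff {a b c : V} (h : clF G a = clF G b) (hca : c ≠ a) (hcb : c ≠ b) :
    G.Adj c a ↔ G.Adj c b := by
  constructor
  · intro hadj
    have : c ∈ clF G b := h ▸ (mem_clF.2 (Or.inr hadj.symm))
    rcases mem_clF.1 this with h' | h'
    · exact absurd h' hcb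
    · exact h'.symm
  · intro hadj
    have : c ∈ clF G a := h.symm ▸ (mem_clF.2 (Or.inr hadj.symm))
    rcases mem_clF.1 this with h' | h'
    · exact absurd h' hca
    · exact h'.symm

lemma tw_inter {x v : V} (h : clF G x = clF G v) (hx : x ∈ G.neighborFinset v) :
    G.neighborFinset x ∩ G.neighborFinset v = (G.neighborFinset v).erase x := by
  ext y
  simp only [Finset.mem_inter, Finset.mem_erase, SimpleGraph.mem_neighborFinset]
  constructor
  · rintro ⟨h1, h2⟩
    exact ⟨(G.ne_of_adj h1).symm, h2⟩
  · rintro ⟨h1, h2⟩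
    refine ⟨?_, h2⟩
    have hyv : y ≠ v := (G.ne_of_adj h2).symm
    exact ((tw_adj_iff h h1 hyv).2 h2.symm).symm

lemma exists_twin (v : V) (h5 : ∀ w : V, (G.neighborFinset w).card = 5)
    (hs : ∑ u ∈ G.neighborFinset v, (G.neighborFinset u ∩ G.neighborFinset v).card = 16) :
    ∃ u, u ≠ v ∧ u ∈ G.neighborFinset v ∧ clF G u = clF G v := by
  -- first find u with lambda = 4
  have hle : ∀ u ∈ G.neighborFinset v,
      (G.neighborFinset u ∩ G.neighborFinset v).card ≤ 4 := by
    intro u hu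
    have hvu : v ∈ G.neighborFinset u := by
      rw [SimpleGraph.mem_neighborFinset] at hu ⊢; exact hu.symm
    have hsub : G.neighborFinset u ∩ G.neighborFinset v ⊆ (G.neighborFinset u).erase v := by
      intro x hx
      rw [Finset.mem_inter] at hx
      refine Finset.mem_erase.2 ⟨?_, hx.1⟩
      simp only [SimpleGraph.mem_neighborFinset] at hx
      exact (G.ne_of_adj hx.2).symm
    calc (G.neighborFinset u ∩ G.neighborFinset v).card
        ≤ ((G.neighborFinset u).erase v).card := Finset.card_le_card hsub
      _ = 4 := by rw [Finset.card_erase_of_mem hvu, h5 u]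
  have hex : ∃ u ∈ G.neighborFinset v,
      (G.neighborFinset u ∩ G.neighborFinset v).card = 4 := by
    by_contra hc
    push_neg at hc
    have : ∀ u ∈ G.neighborFinset v,
        (G.neighborFinset u ∩ G.neighborFinset v).card ≤ 3 := by
      intro u hu
      have := hle u hu
      have := hc u hu
      omega
    have hb := Finset.sum_le_card_nsmul _ _ 3 this
    rw [h5 v, smul_eq_mul] at hb
    omega
  obtain ⟨u, huNv, h4⟩ := hex
  have huv : G.Adj v u := SimpleGraph.mem_neighborFinset .. |>.1 huNv
  have hvNu : v ∈ G.neighborFinset u := SimpleGraph.mem_neighborFinset .. |>.2 huv.symm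
  refine ⟨u, G.ne_of_adj huv |>.symm, huNv, ?_⟩
  -- intersection = both erases
  have hsub1 : G.neighborFinset u ∩ G.neighborFinset v ⊆ (G.neighborFinset u).erase v := by
    intro x hx
    rw [Finset.mem_inter] at hx
    refine Finset.mem_erase.2 ⟨?_, hx.1⟩
    simp only [SimpleGraph.mem_neighborFinset] at hx
    exact (G.ne_of_adj hx.2).symm
  have hsub2 : G.neighborFinset u ∩ G.neighborFinset v ⊆ (G.neighborFinset v).erase u := by
    intro x hx
    rw [Finset.mem_inter] at hx
    refine Finset.mem_erase.2 ⟨?_, hx.2⟩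
    simp only [SimpleGraph.mem_neighborFinset] at hx
    exact (G.ne_of_adj hx.1).symm
  have hc1 : ((G.neighborFinset u).erase v).card = 4 := by
    rw [Finset.card_erase_of_mem hvNu, h5 u]
  have hc2 : ((G.neighborFinset v).erase u).card = 4 := by
    rw [Finset.card_erase_of_mem huNv, h5 v]
  have he1 : G.neighborFinset u ∩ G.neighborFinset v = (G.neighborFinset u).erase v :=
    Finset.eq_of_subset_of_card_le hsub1 (by omega)
  have he2 : G.neighborFinset u ∩ G.neighborFinset v = (G.neighborFinset v).erase u :=
    Finset.eq_of_subset_of_card_le hsub2 (by omega)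
  show insert u (G.neighborFinset u) = insert v (G.neighborFinset v)
  calc insert u (G.neighborFinset u)
      = insert u (insert v ((G.neighborFinset u).erase v)) := by
        rw [Finset.insert_erase hvNu]
    _ = insert v (insert u ((G.neighborFinset v).erase u)) := by
        rw [← he1, ← he2, Finset.insert_comm]
    _ = insert v (G.neighborFinset v) := by rw [Finset.insert_erase huNv]



lemma twin_in_S {v u : V} (h5 : ∀ w : V, (G.neighborFinset w).card = 5)
    (hsum : ∀ w : V, ∑ x ∈ G.neighborFinset w,
      (G.neighborFinset x ∩ G.neighborFinset w).card = 16)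
    (hu : clF G u = clF G v)
    {x : V} (hx : x ∈ (G.neighborFinset v).erase u) (hxv : ¬ clF G x = clF G v) :
    ∃ y ∈ (G.neighborFinset v).erase u, y ≠ x ∧ clF G y = clF G x ∧ ¬ clF G y = clF G v := by
  obtain ⟨hxu, hxNv⟩ := Finset.mem_erase.1 hx
  obtain ⟨y, hyx, hyNx, hty⟩ := exists_twin x h5 (hsum x)
  have hyv : y ≠ v := by
    rintro rfl
    exact hxv hty.symm
  have hyadjx : G.Adj x y := SimpleGraph.mem_neighborFinset .. |>.1 hyNx
  have hvNx : G.Adj x v := (SimpleGraph.mem_neighborFinset .. |>.1 hxNv).symm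
  -- v ∈ clF y, so y adjacent to v
  have hyNv : y ∈ G.neighborFinset v := by
    have : v ∈ clF G y := hty ▸ (mem_clF.2 (Or.inr hvNx))
    rcases mem_clF.1 this with h' | h'
    · exact absurd h'.symm hyv
    · exact SimpleGraph.mem_neighborFinset .. |>.2 h'.symm
  have hyu : y ≠ u := by
    rintro rfl
    exact hxv (hty.symm.trans hu)
  refine ⟨y, Finset.mem_erase.2 ⟨hyu, hyNv⟩, hyx, hty, ?_⟩
  intro hcy
  exact hxv (hty.symm.trans hcy)

lemma twin_unique {v u w : V} (h5 : ∀ w : V, (G.neighborFinset w).card = 5)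
    (hsum : ∀ w : V, ∑ x ∈ G.neighborFinset w,
      (G.neighborFinset x ∩ G.neighborFinset w).card = 16)
    (hu : clF G u = clF G v) (hune : u ≠ v)
    (hw : clF G w = clF G v) (hwne : w ≠ v) : u = w := by
  by_contra huw
  have huNv : u ∈ G.neighborFinset v :=
    SimpleGraph.mem_neighborFinset .. |>.2 (tw_adj hu hune).symm
  have hwNv : w ∈ G.neighborFinset v :=
    SimpleGraph.mem_neighborFinset .. |>.2 (tw_adj hw hwne).symm
  set S := (G.neighborFinset v).erase u with hS
  have hScard : S.card = 4 := by
    rw [hS, Finset.card_erase_of_mem huNv, h5 v]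
  set A := S.filter (fun x => clF G x = clF G v) with hA
  set B := S.filter (fun x => ¬ clF G x = clF G v) with hB
  have hwA : w ∈ A := by
    rw [hA, Finset.mem_filter]
    exact ⟨Finset.mem_erase.2 ⟨fun h => huw h.symm, hwNv⟩, hw⟩
  have hAcard : 1 ≤ A.card := Finset.card_pos.2 ⟨w, hwA⟩
  -- d-value of twins of v
  have hd4 : ∀ x, clF G x = clF G v → x ∈ G.neighborFinset v →
      (G.neighborFinset x ∩ G.neighborFinset v).card = 4 := by
    intro x htx hxNv
    rw [tw_inter htx hxNv, Finset.card_erase_of_mem hxNv, h5 v]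
  -- lower bound for x ∈ B
  have hdB : ∀ x ∈ B, A.card + 2 ≤ (G.neighborFinset x ∩ G.neighborFinset v).card := by
    intro x hxB
    rw [hB, Finset.mem_filter] at hxB
    obtain ⟨hxS, hxv⟩ := hxB
    obtain ⟨y, hyS, hyx, hty, hyv⟩ := twin_in_S h5 hsum hu hxS hxv
    obtain ⟨hxu, hxNv⟩ := Finset.mem_erase.1 hxS
    have hyB : y ∈ B := by rw [hB, Finset.mem_filter]; exact ⟨hyS, hyv⟩
    have hvadjx : G.Adj v x := SimpleGraph.mem_neighborFinset .. |>.1 hxNv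
    have hsub : insert u (insert y A) ⊆ G.neighborFinset x ∩ G.neighborFinset v := by
      intro z hz
      rcases Finset.mem_insert.1 hz with rfl | hz
      · -- z = u
        refine Finset.mem_inter.2 ⟨?_, huNv⟩
        rw [SimpleGraph.mem_neighborFinset]
        exact (tw_adj_iff hu (fun h => hxu h) (G.ne_of_adj hvadjx).symm).2 hvadjx.symm
      rcases Finset.mem_insert.1 hz with rfl | hzA
      · -- z = y
        refine Finset.mem_inter.2 ⟨?_, Finset.mem_erase.1 hyS |>.2⟩
        rw [SimpleGraph.mem_neighborFinset]
        exact (tw_adj hty hyx).symm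
      · -- z ∈ A
        rw [hA, Finset.mem_filter] at hzA
        obtain ⟨hzS, hzv⟩ := hzA
        have hxz : x ≠ z := by rintro rfl; exact hxv hzv
        refine Finset.mem_inter.2 ⟨?_, Finset.mem_erase.1 hzS |>.2⟩
        rw [SimpleGraph.mem_neighborFinset]
        exact (tw_adj_iff hzv hxz (G.ne_of_adj hvadjx).symm).2 hvadjx.symm
    have hcard : (insert u (insert y A)).card = A.card + 2 := by
      have hyA : y ∉ A := by
        rw [hA, Finset.mem_filter]
        rintro ⟨-, h⟩; exact hyv h
      have huyA : u ∉ insert y A := by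
        rw [Finset.mem_insert]
        rintro (rfl | huA)
        · exact (Finset.mem_erase.1 hyS).1 rfl
        · rw [hA, Finset.mem_filter] at huA
          exact (Finset.mem_erase.1 huA.1).1 rfl
      rw [Finset.card_insert_of_notMem huyA, Finset.card_insert_of_notMem hyA]
    calc A.card + 2 = (insert u (insert y A)).card := hcard.symm
      _ ≤ _ := Finset.card_le_card hsub
  -- sum decomposition
  have hsplit : (16:ℕ) = 4 + (∑ x ∈ A, (G.neighborFinset x ∩ G.neighborFinset v).card)
      + ∑ x ∈ B, (G.neighborFinset x ∩ G.neighborFinset v).card := by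
    have h1 := hsum v
    rw [← Finset.add_sum_erase _ _ huNv] at h1
    rw [hd4 u hu huNv] at h1
    rw [← Finset.sum_filter_add_sum_filter_not ((G.neighborFinset v).erase u)
      (fun x => clF G x = clF G v)] at h1
    rw [← hA, ← hB] at h1
    omega
  have hAsum : ∑ x ∈ A, (G.neighborFinset x ∩ G.neighborFinset v).card = 4 * A.card := by
    have hall : ∀ x ∈ A, (G.neighborFinset x ∩ G.neighborFinset v).card = 4 := by
      intro x hx
      rw [hA, Finset.mem_filter] at hx
      exact hd4 x hx.2 (Finset.mem_erase.1 hx.1).2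
    rw [Finset.sum_congr rfl hall, Finset.sum_const, smul_eq_mul, mul_comm]
  have hBsum := Finset.card_nsmul_le_sum B _ _ hdB
  rw [smul_eq_mul] at hBsum
  have hABcard : A.card + B.card = 4 := by
    rw [hA, hB, Finset.card_filter_add_card_filter_not, hScard]
  have hA4 : A.card ≤ 4 := by omega
  have hA1 : 1 ≤ A.card := hAcard
  interval_cases h : A.card <;> omega

lemma dge {v u p q r s : V} (hu : clF G u = clF G v)
    (huNv : u ∈ G.neighborFinset v) (hpNv : p ∈ G.neighborFinset v)
    (hqNv : q ∈ G.neighborFinset v) (hrNv : r ∈ G.neighborFinset v)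
    (hsNv : s ∈ G.neighborFinset v)
    (hpq : clF G q = clF G p) (hpu : p ≠ u) (hqp : q ≠ p)
    (hpr : G.Adj p r) (hps : G.Adj p s)
    (hqu : q ≠ u) (hru : r ≠ u) (hsu : s ≠ u)
    (hqr : q ≠ r) (hqs : q ≠ s) (hrs : r ≠ s) :
    4 ≤ (G.neighborFinset p ∩ G.neighborFinset v).card := by
  have hpv : G.Adj v p := SimpleGraph.mem_neighborFinset .. |>.1 hpNv
  have hsub : ({u, q, r, s} : Finset V) ⊆ G.neighborFinset p ∩ G.neighborFinset v := by
    intro z hz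
    simp only [Finset.mem_insert, Finset.mem_singleton] at hz
    refine Finset.mem_inter.2 ⟨?_, ?_⟩
    · rw [SimpleGraph.mem_neighborFinset]
      rcases hz with rfl | rfl | rfl | rfl
      · exact (tw_adj_iff hu hpu (G.ne_of_adj hpv).symm).2 hpv.symm
      · exact (tw_adj hpq hqp).symm
      · exact hpr
      · exact hps
    · rcases hz with rfl | rfl | rfl | rfl
      · exact huNv
      · exact hqNv
      · exact hrNv
      · exact hsNv
  have hcard : ({u, q, r, s} : Finset V).card = 4 := by
    rw [Finset.card_insert_of_notMem (by simp [hqu.symm, hru.symm, hsu.symm]),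
      Finset.card_insert_of_notMem (by simp [hqr, hqs]),
      Finset.card_insert_of_notMem (by simp [hrs]), Finset.card_singleton]
  calc (4:ℕ) = ({u, q, r, s} : Finset V).card := hcard.symm
    _ ≤ _ := Finset.card_le_card hsub

lemma dle {v u p q r s : V}
    (hNv : ∀ w ∈ G.neighborFinset v, w = u ∨ w = p ∨ w = q ∨ w = r ∨ w = s)
    (hpr : ¬ G.Adj p r) (hps : ¬ G.Adj p s) :
    (G.neighborFinset p ∩ G.neighborFinset v).card ≤ 2 := by
  have hsub : G.neighborFinset p ∩ G.neighborFinset v ⊆ ({u, q} : Finset V) := by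
    intro w hw
    obtain ⟨hw1, hw2⟩ := Finset.mem_inter.1 hw
    rw [SimpleGraph.mem_neighborFinset] at hw1
    rcases hNv w hw2 with rfl | rfl | rfl | rfl | rfl
    · simp
    · exact absurd hw1 (G.irrefl)
    · simp
    · exact absurd hw1 hpr
    · exact absurd hw1 hps
  calc (G.neighborFinset p ∩ G.neighborFinset v).card
      ≤ ({u, q} : Finset V).card := Finset.card_le_card hsub
    _ ≤ 2 := (Finset.card_insert_le _ _).trans (by simp)

end

lemma no_main {V : Type} [Fintype V] [DecidableEq V] (G : SimpleGraph V) [DecidableRel G.Adj]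
    (v : V) (h5 : ∀ w : V, (G.neighborFinset w).card = 5)
    (hsum : ∀ w : V, ∑ x ∈ G.neighborFinset w,
      (G.neighborFinset x ∩ G.neighborFinset w).card = 16) : False := by
  obtain ⟨u, hune, huNv, hu⟩ := exists_twin v h5 (hsum v)
  set S := (G.neighborFinset v).erase u with hS
  have hScard : S.card = 4 := by rw [hS, Finset.card_erase_of_mem huNv, h5 v]
  have allB : ∀ x ∈ S, ¬ clF G x = clF G v := by
    intro x hx hcl
    obtain ⟨hxu, hxNv⟩ := Finset.mem_erase.1 hx
    have hxv : x ≠ v :=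
      (G.ne_of_adj (SimpleGraph.mem_neighborFinset .. |>.1 hxNv)).symm
    exact hxu (twin_unique h5 hsum hu hune hcl hxv).symm
  have twinS : ∀ x ∈ S, ∃ y ∈ S, y ≠ x ∧ clF G y = clF G x := by
    intro x hx
    obtain ⟨y, hyS, hyx, hty, _⟩ := twin_in_S h5 hsum hu hx (allB x hx)
    exact ⟨y, hyS, hyx, hty⟩
  obtain ⟨x1, hx1S⟩ := Finset.card_pos.1 (by rw [hScard]; norm_num : 0 < S.card)
  obtain ⟨y1, hy1S, hy1x1, hty1⟩ := twinS x1 hx1S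
  have h2card : ((S.erase x1).erase y1).card = 2 := by
    rw [Finset.card_erase_of_mem (Finset.mem_erase.2 ⟨hy1x1, hy1S⟩),
      Finset.card_erase_of_mem hx1S, hScard]
  obtain ⟨x3, hx3m⟩ := Finset.card_pos.1 (by rw [h2card]; norm_num : 0 < ((S.erase x1).erase y1).card)
  have hx3y1 : x3 ≠ y1 := (Finset.mem_erase.1 hx3m).1
  have hx3x1 : x3 ≠ x1 := (Finset.mem_erase.1 (Finset.mem_erase.1 hx3m).2).1
  have hx3S : x3 ∈ S := Finset.mem_of_mem_erase (Finset.mem_of_mem_erase hx3m)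
  obtain ⟨y3, hy3S, hy3x3, hty3⟩ := twinS x3 hx3S
  have hy3x1 : y3 ≠ x1 := by
    rintro rfl
    exact hx3y1 (twin_unique h5 hsum hty1 hy1x1 hty3.symm hx3x1).symm
  have hy3y1 : y3 ≠ y1 := by
    rintro rfl
    exact hx3y1 (twin_unique h5 hsum hty1 hy1x1 (hty3.symm.trans hty1) hx3x1).symm
  -- the four vertices of S
  have hquadcard : ({x1, y1, x3, y3} : Finset V).card = 4 := by
    rw [Finset.card_insert_of_notMem (by simp [hy1x1.symm, hx3x1.symm, hy3x1.symm]),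
      Finset.card_insert_of_notMem (by simp [hx3y1.symm, hy3y1.symm]),
      Finset.card_insert_of_notMem (by simp [hy3x3.symm]), Finset.card_singleton]
  have hquadsub : ({x1, y1, x3, y3} : Finset V) ⊆ S := by
    intro z hz
    simp only [Finset.mem_insert, Finset.mem_singleton] at hz
    rcases hz with rfl | rfl | rfl | rfl
    exacts [hx1S, hy1S, hx3S, hy3S]
  have hquad : ({x1, y1, x3, y3} : Finset V) = S :=
    Finset.eq_of_subset_of_card_le hquadsub (by omega)
  have hmem : ∀ z ∈ S, z ∈ G.neighborFinset v := fun z hz => (Finset.mem_erase.1 hz).2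
  have hmemu : ∀ z ∈ S, z ≠ u := fun z hz => (Finset.mem_erase.1 hz).1
  have hNv : ∀ w ∈ G.neighborFinset v, w = u ∨ w = x1 ∨ w = y1 ∨ w = x3 ∨ w = y3 := by
    intro w hw
    by_cases hwu : w = u
    · exact Or.inl hwu
    · right
      have hwS : w ∈ S := Finset.mem_erase.2 ⟨hwu, hw⟩
      rw [← hquad] at hwS
      simpa using hwS
  have hsplitS : ∑ x ∈ S, (G.neighborFinset x ∩ G.neighborFinset v).card = 12 := by
    have h1 := hsum v
    rw [← Finset.add_sum_erase _ _ huNv, tw_inter hu huNv,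
      Finset.card_erase_of_mem huNv, h5 v, ← hS] at h1
    omega
  have hsum4 : (G.neighborFinset x1 ∩ G.neighborFinset v).card
      + (G.neighborFinset y1 ∩ G.neighborFinset v).card
      + (G.neighborFinset x3 ∩ G.neighborFinset v).card
      + (G.neighborFinset y3 ∩ G.neighborFinset v).card = 12 := by
    rw [← hsplitS, ← hquad,
      Finset.sum_insert (by simp [hy1x1.symm, hx3x1.symm, hy3x1.symm]),
      Finset.sum_insert (by simp [hx3y1.symm, hy3y1.symm]),
      Finset.sum_insert (by simp [hy3x3.symm]), Finset.sum_singleton]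
    ring
  by_cases hc : G.Adj x1 x3
  · -- all cross edges present
    have a14 : G.Adj x1 y3 := (tw_adj_iff hty3 hy3x1.symm hx3x1.symm).2 hc
    have a23 : G.Adj y1 x3 := ((tw_adj_iff hty1 hx3y1 hx3x1).2 hc.symm).symm
    have a24 : G.Adj y1 y3 := (tw_adj_iff hty3 hy3y1.symm hx3y1.symm).2 a23
    have d1 := dge hu huNv (hmem x1 hx1S) (hmem y1 hy1S) (hmem x3 hx3S) (hmem y3 hy3S)
      hty1 (hmemu x1 hx1S) hy1x1 hc a14 (hmemu y1 hy1S) (hmemu x3 hx3S) (hmemu y3 hy3S)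
      hx3y1.symm hy3y1.symm hy3x3.symm
    have d2 := dge hu huNv (hmem y1 hy1S) (hmem x1 hx1S) (hmem x3 hx3S) (hmem y3 hy3S)
      hty1.symm (hmemu y1 hy1S) hy1x1.symm a23 a24 (hmemu x1 hx1S) (hmemu x3 hx3S)
      (hmemu y3 hy3S) hx3x1.symm hy3x1.symm hy3x3.symm
    have d3 := dge hu huNv (hmem x3 hx3S) (hmem y3 hy3S) (hmem x1 hx1S) (hmem y1 hy1S)
      hty3 (hmemu x3 hx3S) hy3x3 hc.symm a23.symm (hmemu y3 hy3S) (hmemu x1 hx1S)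
      (hmemu y1 hy1S) hy3x1 hy3y1 hy1x1.symm
    have d4 := dge hu huNv (hmem y3 hy3S) (hmem x3 hx3S) (hmem x1 hx1S) (hmem y1 hy1S)
      hty3.symm (hmemu y3 hy3S) hy3x3.symm a14.symm a24.symm (hmemu x3 hx3S)
      (hmemu x1 hx1S) (hmemu y1 hy1S) hx3x1 hx3y1 hy1x1.symm
    omega
  · -- no cross edges
    have n14 : ¬ G.Adj x1 y3 := fun h => hc ((tw_adj_iff hty3 hy3x1.symm hx3x1.symm).1 h)
    have n23 : ¬ G.Adj y1 x3 := fun h => hc (((tw_adj_iff hty1 hx3y1 hx3x1).1 h.symm).symm)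
    have n24 : ¬ G.Adj y1 y3 := fun h => n23 ((tw_adj_iff hty3 hy3y1.symm hx3y1.symm).1 h)
    have hNv2 : ∀ w ∈ G.neighborFinset v, w = u ∨ w = y1 ∨ w = x1 ∨ w = x3 ∨ w = y3 := by
      intro w hw
      rcases hNv w hw with h|h|h|h|h
      exacts [Or.inl h, Or.inr (Or.inr (Or.inl h)), Or.inr (Or.inl h),
        Or.inr (Or.inr (Or.inr (Or.inl h))), Or.inr (Or.inr (Or.inr (Or.inr h)))]
    have hNv3 : ∀ w ∈ G.neighborFinset v, w = u ∨ w = x3 ∨ w = y3 ∨ w = x1 ∨ w = y1 := by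
      intro w hw
      rcases hNv w hw with h|h|h|h|h
      exacts [Or.inl h, Or.inr (Or.inr (Or.inr (Or.inl h))),
        Or.inr (Or.inr (Or.inr (Or.inr h))), Or.inr (Or.inl h), Or.inr (Or.inr (Or.inl h))]
    have hNv4 : ∀ w ∈ G.neighborFinset v, w = u ∨ w = y3 ∨ w = x3 ∨ w = x1 ∨ w = y1 := by
      intro w hw
      rcases hNv w hw with h|h|h|h|h
      exacts [Or.inl h, Or.inr (Or.inr (Or.inr (Or.inl h))),
        Or.inr (Or.inr (Or.inr (Or.inr h))), Or.inr (Or.inr (Or.inl h)), Or.inr (Or.inl h)]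
    have d1 := dle hNv hc n14
    have d2 := dle hNv2 n23 n24
    have d3 := dle hNv3 (fun h => hc h.symm) (fun h => n23 h.symm)
    have d4 := dle hNv4 (fun h => n14 h.symm) (fun h => n24 h.symm)
    omega

/-- No (5,8)-constant graph exists: there is no finite simple graph on a
nonempty vertex set that is 5-regular and in which the subgraph induced by
the open neighbourhood of every vertex has exactly 8 edges. -/
theorem no_five_eight_constant_graph :
    ¬ ∃ (V : Type) (_ : Fintype V) (_ : Nonempty V) (G : SimpleGraph V),
      (∀ v : V, Nat.card (G.neighborSet v) = 5) ∧
      (∀ v : V, nbhdEdgeCount G v = 8) := by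
  rintro ⟨V, hF, hne, G, h5, h8⟩
  classical
  have h5' : ∀ w : V, (G.neighborFinset w).card = 5 := by
    intro w
    have h := h5 w
    rw [Nat.card_eq_fintype_card] at h
    rw [SimpleGraph.neighborFinset, Set.toFinset_card]
    exact h
  have hsum : ∀ w : V, ∑ x ∈ G.neighborFinset w,
      (G.neighborFinset x ∩ G.neighborFinset w).card = 16 :=
    fun w => sum_lambda w (h8 w)
  obtain ⟨v⟩ := hne
  exact no_main G v h5' hsum
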